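/- Let (Ω, F, P) be a probability space and ℓ : [0,T] × ℝ → ℝ a (deterministic) function such that for each t, y ↦ ℓ(t,y) is strictly increasing, bi-Lipschitz with constants 0 < c ≤ C (i.e. c|x−y| ≤ |ℓ(t,x)−ℓ(t,y)| ≤ C|x−y|), and of linear growth. For t ∈ [0,T] and X ∈ L²(Ω) define L_t(X) = inf { x ≥ 0 : E[ℓ(t, x + X)] ≥ 0 }. Then for all X, Y ∈ L²(Ω): |L_t(X) − L_t(Y)| ≤ (C/c)·E[|X − Y|]. -/

import Mathlib

open MeasureTheory Set

/-- If the loss function `ℓ(t,·)` is strictly increasing, bi-Lipschitz with constants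
`0 < c ≤ C` and of linear growth, then the shift operator
`L_t(X) = inf {x ≥ 0 : E[ℓ(t, x+X)] ≥ 0}` is `L¹`-Lipschitz with constant `C/c`. -/
theorem shift_operator_lipschitz {Ω : Type*} [MeasurableSpace Ω]
    (μ : Measure Ω) [IsProbabilityMeasure μ]
    (T t c C : ℝ) (ht : t ∈ Icc 0 T) (hc : 0 < c) (hcC : c ≤ C)
    (ℓ : ℝ → ℝ → ℝ)
    (hmono : ∀ s ∈ Icc 0 T, StrictMono (ℓ s))
    (hbilip : ∀ s ∈ Icc 0 T, ∀ x y : ℝ,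
      c * |x - y| ≤ |ℓ s x - ℓ s y| ∧ |ℓ s x - ℓ s y| ≤ C * |x - y|)
    (hgrowth : ∃ D : ℝ, ∀ s ∈ Icc 0 T, ∀ y : ℝ, |ℓ s y| ≤ D * (1 + |y|))
    (X Y : Ω → ℝ) (hX : MemLp X 2 μ) (hY : MemLp Y 2 μ) :
    |sInf {x : ℝ | 0 ≤ x ∧ 0 ≤ ∫ ω, ℓ t (x + X ω) ∂μ}
      - sInf {x : ℝ | 0 ≤ x ∧ 0 ≤ ∫ ω, ℓ t (x + Y ω) ∂μ}|
      ≤ (C / c) * ∫ ω, |X ω - Y ω| ∂μ := by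
  obtain ⟨D, hD⟩ := hgrowth
  have hC : 0 < C := lt_of_lt_of_le hc hcC
  have hc0 : c ≠ 0 := hc.ne'
  set K := C / c with hK
  have hK0 : 0 ≤ K := by positivity
  -- lower Lipschitz bound with monotonicity
  have hlow : ∀ a b : ℝ, b ≤ a → c * (a - b) ≤ ℓ t a - ℓ t b := by
    intro a b hba
    have h1 := (hbilip t ht a b).1
    have hmle : ℓ t b ≤ ℓ t a := (hmono t ht).monotone hba
    rw [abs_of_nonneg (by linarith : (0:ℝ) ≤ a - b)] at h1
    rwa [abs_of_nonneg (by linarith : (0:ℝ) ≤ ℓ t a - ℓ t b)] at h1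
  have hup : ∀ a b : ℝ, |ℓ t a - ℓ t b| ≤ C * |a - b| := fun a b => (hbilip t ht a b).2
  have hcont : Continuous (ℓ t) := by
    have : LipschitzWith ⟨C, hC.le⟩ (ℓ t) := LipschitzWith.of_dist_le_mul (fun a b => by
      simp only [Real.dist_eq, NNReal.coe_mk]; exact hup a b)
    exact this.continuous
  have hXint : Integrable X μ := hX.integrable one_le_two
  have hYint : Integrable Y μ := hY.integrable one_le_two
  -- integrability of the composed loss
  have hint : ∀ (Z : Ω → ℝ), Integrable Z μ → ∀ a : ℝ,
      Integrable (fun ω => ℓ t (a + Z ω)) μ := by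
    intro Z hZ a
    have hasm : AEStronglyMeasurable (fun ω => ℓ t (a + Z ω)) μ :=
      hcont.comp_aestronglyMeasurable ((aestronglyMeasurable_const (b := a)).add hZ.1)
    have hbound : Integrable (fun ω => D * (1 + |a + Z ω|)) μ :=
      by
      have h1 : Integrable (fun ω => a + Z ω) μ := (integrable_const a).add hZ
      have h2 : Integrable (fun ω => (1:ℝ) + |a + Z ω|) μ := (integrable_const 1).add h1.abs
      exact h2.const_mul D
    exact hbound.mono' hasm (Filter.Eventually.of_forall fun ω => by
      simpa [Real.norm_eq_abs] using hD t ht (a + Z ω))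
  -- nonemptiness of the constraint sets
  have hne : ∀ (Z : Ω → ℝ), Integrable Z μ →
      {x : ℝ | 0 ≤ x ∧ 0 ≤ ∫ ω, ℓ t (x + Z ω) ∂μ}.Nonempty := by
    intro Z hZ
    set I := ∫ ω, ℓ t (0 + Z ω) ∂μ with hI
    set x := max 0 (-I / c) with hxdef
    have hx0 : 0 ≤ x := le_max_left _ _
    refine ⟨x, hx0, ?_⟩
    have hpt : ∀ ω, ℓ t (0 + Z ω) + c * x ≤ ℓ t (x + Z ω) := by
      intro ω
      have h := hlow (x + Z ω) (0 + Z ω) (by linarith)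
      have he : (x + Z ω) - (0 + Z ω) = x := by ring
      rw [he] at h
      linarith
    have hB : Integrable (fun ω => ℓ t (0 + Z ω) + c * x) μ :=
      (hint Z hZ 0).add (integrable_const _)
    have him : ∫ ω, (ℓ t (0 + Z ω) + c * x) ∂μ ≤ ∫ ω, ℓ t (x + Z ω) ∂μ :=
      integral_mono hB (hint Z hZ x) hpt
    have hci : ∫ ω, (ℓ t (0 + Z ω) + c * x) ∂μ = I + c * x := by
      rw [integral_add (hint Z hZ 0) (integrable_const _), integral_const]
      simp [hI]
    rw [hci] at him
    have hcx : -I ≤ x * c := (div_le_iff₀ hc).mp (le_max_right 0 (-I / c))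
    have := mul_comm x c
    linarith
  -- the key one-sided estimate
  have key : ∀ (Z W : Ω → ℝ), Integrable Z μ → Integrable W μ →
      sInf {x : ℝ | 0 ≤ x ∧ 0 ≤ ∫ ω, ℓ t (x + Z ω) ∂μ}
        ≤ sInf {x : ℝ | 0 ≤ x ∧ 0 ≤ ∫ ω, ℓ t (x + W ω) ∂μ}
          + K * ∫ ω, |Z ω - W ω| ∂μ := by
    intro Z W hZ hW
    set δ := ∫ ω, |Z ω - W ω| ∂μ with hδ
    have hδ0 : 0 ≤ δ := integral_nonneg fun ω => abs_nonneg _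
    have habs : Integrable (fun ω => |Z ω - W ω|) μ := (hZ.sub hW).abs
    have hbdd : BddBelow {x : ℝ | 0 ≤ x ∧ 0 ≤ ∫ ω, ℓ t (x + Z ω) ∂μ} :=
      ⟨0, fun x hx => hx.1⟩
    have hKδ0 : 0 ≤ K * δ := mul_nonneg hK0 hδ0
    have hstep : ∀ y ∈ {x : ℝ | 0 ≤ x ∧ 0 ≤ ∫ ω, ℓ t (x + W ω) ∂μ},
        sInf {x : ℝ | 0 ≤ x ∧ 0 ≤ ∫ ω, ℓ t (x + Z ω) ∂μ} ≤ y + K * δ := by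
      intro y hy
      apply csInf_le hbdd
      have hy0 : 0 ≤ y := hy.1
      refine ⟨by linarith, ?_⟩
      have hpt : ∀ ω, ℓ t (y + W ω) + C * δ - C * |Z ω - W ω|
          ≤ ℓ t (y + K * δ + Z ω) := by
        intro ω
        have h1 : |ℓ t (y + K * δ + Z ω) - ℓ t (y + K * δ + W ω)| ≤ C * |Z ω - W ω| := by
          have h := hup (y + K * δ + Z ω) (y + K * δ + W ω)
          have he : (y + K * δ + Z ω) - (y + K * δ + W ω) = Z ω - W ω := by ring
          rwa [he] at h
        have h1' := neg_abs_le (ℓ t (y + K * δ + Z ω) - ℓ t (y + K * δ + W ω))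
        have h2 := hlow (y + K * δ + W ω) (y + W ω) (by linarith)
        have he2 : (y + K * δ + W ω) - (y + W ω) = K * δ := by ring
        rw [he2] at h2
        have hcK : c * (K * δ) = C * δ := by rw [hK]; field_simp
        linarith
      have hA : Integrable (fun ω => ℓ t (y + W ω) + C * δ) μ :=
        (hint W hW y).add (integrable_const _)
      have hB : Integrable (fun ω => C * |Z ω - W ω|) μ := habs.const_mul C
      have hIint : Integrable (fun ω => ℓ t (y + W ω) + C * δ - C * |Z ω - W ω|) μ :=
        hA.sub hB
      have him : ∫ ω, (ℓ t (y + W ω) + C * δ - C * |Z ω - W ω|) ∂μ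
          ≤ ∫ ω, ℓ t (y + K * δ + Z ω) ∂μ :=
        integral_mono hIint (hint Z hZ (y + K * δ)) hpt
      have hcomp : ∫ ω, (ℓ t (y + W ω) + C * δ - C * |Z ω - W ω|) ∂μ
          = (∫ ω, ℓ t (y + W ω) ∂μ) + C * δ - C * δ := by
        rw [integral_sub hA hB,
          integral_add (hint W hW y) (integrable_const _), integral_const,
          integral_const_mul]
        simp [← hδ]
      rw [hcomp] at him
      have hy2 := hy.2
      show 0 ≤ ∫ ω, ℓ t (y + K * δ + Z ω) ∂μ
      linarith
    have hlb : sInf {x : ℝ | 0 ≤ x ∧ 0 ≤ ∫ ω, ℓ t (x + Z ω) ∂μ} - K * δ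
        ≤ sInf {x : ℝ | 0 ≤ x ∧ 0 ≤ ∫ ω, ℓ t (x + W ω) ∂μ} :=
      le_csInf (hne W hW) (fun y hy => by linarith [hstep y hy])
    linarith
  have h1 := key X Y hXint hYint
  have h2 := key Y X hYint hXint
  have hsymm : ∫ ω, |Y ω - X ω| ∂μ = ∫ ω, |X ω - Y ω| ∂μ :=
    integral_congr_ae (Filter.Eventually.of_forall fun ω => abs_sub_comm _ _)
  rw [hsymm] at h2
  rw [abs_sub_le_iff]
  exact ⟨by linarith, by linarith⟩
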